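/- arXiv:1612.08280 — 3 statements merged into one kernel-verified Lean document; each statement's English description precedes it below -/
import Mathlib

section
/- Let A = [0,R]² be the square of side R > 0 and let γ : [0,∞) → ℝ be a bounded measurable non-increasing function. Then the map λ ↦ (1/|λA|²)·∫_{λA×λA} γ(‖s − t‖) ds dt is non-increasing on (0,∞), where λA = {λx : x ∈ A}. -/
open MeasureTheory Pointwise

/-- The square `[0,R]² ⊂ ℝ²`. -/
def squareRegion (R : ℝ) : Set (EuclideanSpace ℝ (Fin 2)) :=
  {x | x 0 ∈ Set.Icc 0 R ∧ x 1 ∈ Set.Icc 0 R}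

lemma squareRegion_eq (R : ℝ) :
    squareRegion R = (MeasurableEquiv.toLp 2 (Fin 2 → ℝ)).symm ⁻¹'
      (Set.univ.pi fun _ => Set.Icc 0 R) := by
  ext x
  simp only [squareRegion, Set.mem_preimage, Set.mem_pi, Set.mem_univ, forall_true_left,
    Fin.forall_fin_two, Set.mem_setOf_eq]
  rfl

lemma volume_squareRegion (R : ℝ) :
    volume (squareRegion R) = ENNReal.ofReal R ^ 2 := by
  rw [squareRegion_eq,
    (EuclideanSpace.volume_preserving_symm_measurableEquiv_toLp (Fin 2)).measure_preimage
      (MeasurableSet.univ_pi fun _ => measurableSet_Icc).nullMeasurableSet,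
    volume_pi_pi]
  simp [Real.volume_Icc, sq]

lemma key_scaling (R l : ℝ) (hR : 0 < R) (hl : 0 < l) (γ : ℝ → ℝ) :
    ((volume (l • squareRegion R)).toReal ^ 2)⁻¹ *
        (∫ s in l • squareRegion R, ∫ t in l • squareRegion R, γ ‖s - t‖)
      = ((R ^ 2) ^ 2)⁻¹ *
        ∫ x in squareRegion R, ∫ y in squareRegion R, γ (l * ‖x - y‖) := by
  set A := squareRegion R with hA
  have hAmeas : MeasurableSet A := by
    rw [hA, squareRegion_eq]
    exact (MeasurableSet.univ_pi fun _ => measurableSet_Icc).preimage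
      (MeasurableEquiv.toLp 2 (Fin 2 → ℝ)).symm.measurable
  have hfr : Module.finrank ℝ (EuclideanSpace ℝ (Fin 2)) = 2 := finrank_euclideanSpace_fin
  -- inner change of variables
  have h1 : ∀ x : EuclideanSpace ℝ (Fin 2),
      (∫ t in l • A, γ ‖l • x - t‖) = l ^ 2 * ∫ y in A, γ (l * ‖x - y‖) := by
    intro x
    have h := Measure.setIntegral_comp_smul_of_pos (μ := volume) (fun t => γ ‖l • x - t‖) A hl
    rw [hfr] at h
    have hn : ∀ y : EuclideanSpace ℝ (Fin 2), γ ‖l • x - l • y‖ = γ (l * ‖x - y‖) := by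
      intro y
      rw [← smul_sub, norm_smul, Real.norm_eq_abs, abs_of_pos hl]
    simp only [hn, smul_eq_mul] at h
    have hl2 : (l ^ 2 : ℝ) ≠ 0 := by positivity
    field_simp at h
    linarith [h]
  have h2 : (∫ s in l • A, ∫ t in l • A, γ ‖s - t‖)
      = l ^ 2 * ∫ x in A, ∫ t in l • A, γ ‖l • x - t‖ := by
    have h := Measure.setIntegral_comp_smul_of_pos (μ := volume)
      (fun s => ∫ t in l • A, γ ‖s - t‖) A hl
    rw [hfr] at h
    simp only [smul_eq_mul] at h
    have hl2 : (l ^ 2 : ℝ) ≠ 0 := by positivity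
    field_simp at h
    linarith [h]
  have h3 : (∫ s in l • A, ∫ t in l • A, γ ‖s - t‖)
      = l ^ 2 * (l ^ 2 * ∫ x in A, ∫ y in A, γ (l * ‖x - y‖)) := by
    rw [h2]
    congr 1
    rw [← integral_const_mul]
    exact setIntegral_congr_fun hAmeas (fun x _ => h1 x)
  have hv : (volume (l • A)).toReal = l ^ 2 * R ^ 2 := by
    rw [Measure.addHaar_smul_of_nonneg volume hl.le, hfr, hA, volume_squareRegion,
      ENNReal.toReal_mul, ENNReal.toReal_ofReal (by positivity)]
    simp [ENNReal.toReal_pow, ENNReal.toReal_ofReal hR.le]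
  rw [h3, hv]
  have hl0 : (l : ℝ) ≠ 0 := hl.ne'
  have hR0 : (R : ℝ) ≠ 0 := hR.ne'
  field_simp

/-- For the square `A = [0,R]²` and a bounded measurable non-increasing `γ`, the map
`λ ↦ (1/|λA|²)·∫_{λA×λA} γ(‖s-t‖) ds dt` is non-increasing on `(0,∞)`. -/
theorem stmt_12 (R : ℝ) (hR : 0 < R) (γ : ℝ → ℝ)
    (hmeas : Measurable γ) (hbdd : ∃ M, ∀ h : ℝ, 0 ≤ h → |γ h| ≤ M)
    (hanti : ∀ a b : ℝ, 0 ≤ a → a ≤ b → γ b ≤ γ a) :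
    ∀ l₁ l₂ : ℝ, 0 < l₁ → l₁ ≤ l₂ →
      ((volume (l₂ • squareRegion R)).toReal ^ 2)⁻¹ *
          (∫ s in l₂ • squareRegion R, ∫ t in l₂ • squareRegion R, γ ‖s - t‖)
        ≤ ((volume (l₁ • squareRegion R)).toReal ^ 2)⁻¹ *
            (∫ s in l₁ • squareRegion R, ∫ t in l₁ • squareRegion R, γ ‖s - t‖) := by
  intro l₁ l₂ hl₁ hle
  have hl₂ : 0 < l₂ := lt_of_lt_of_le hl₁ hle
  rw [key_scaling R l₁ hR hl₁ γ, key_scaling R l₂ hR hl₂ γ]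
  obtain ⟨M, hM⟩ := hbdd
  have hMnn : 0 ≤ M := le_trans (abs_nonneg _) (hM 0 le_rfl)
  set A := squareRegion R with hA
  have hAfin : volume A < ⊤ := by
    rw [hA, volume_squareRegion]
    exact ENNReal.pow_lt_top ENNReal.ofReal_lt_top
  haveI : Fact (volume A < ⊤) := ⟨hAfin⟩
  -- integrability of the inner function
  have hinner_meas : ∀ (l : ℝ) (x : EuclideanSpace ℝ (Fin 2)),
      Measurable fun y : EuclideanSpace ℝ (Fin 2) => γ (l * ‖x - y‖) := fun l x =>
    hmeas.comp (measurable_const.mul ((measurable_const.sub measurable_id).norm))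
  have hinner_int : ∀ (l : ℝ) (x : EuclideanSpace ℝ (Fin 2)), 0 < l →
      IntegrableOn (fun y => γ (l * ‖x - y‖)) A := by
    intro l x hl
    refine ⟨(hinner_meas l x).aestronglyMeasurable, ?_⟩
    apply HasFiniteIntegral.of_bounded (C := M)
    filter_upwards with y
    rw [Real.norm_eq_abs]
    exact hM _ (by positivity)
  -- integrability of the outer function
  have houter_int : ∀ l : ℝ, 0 < l →
      IntegrableOn (fun x => ∫ y in A, γ (l * ‖x - y‖)) A := by
    intro l hl
    have hsm : StronglyMeasurable fun x : EuclideanSpace ℝ (Fin 2) =>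
        ∫ y in A, γ (l * ‖x - y‖) := by
      apply StronglyMeasurable.integral_prod_right
      exact (hmeas.comp
        (measurable_const.mul ((measurable_fst.sub measurable_snd).norm))).stronglyMeasurable
    refine ⟨hsm.aestronglyMeasurable, ?_⟩
    apply HasFiniteIntegral.of_bounded (C := M * (volume A).toReal)
    filter_upwards with x
    calc ‖∫ y in A, γ (l * ‖x - y‖)‖ ≤ M * ((volume.restrict A) Set.univ).toReal := by
          apply norm_integral_le_of_norm_le_const
          filter_upwards with y
          rw [Real.norm_eq_abs]
          exact hM _ (by positivity)
      _ = M * (volume A).toReal := by rw [Measure.restrict_apply_univ]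
  -- pointwise monotonicity
  apply mul_le_mul_of_nonneg_left _ (by positivity)
  apply setIntegral_mono (houter_int l₂ hl₂) (houter_int l₁ hl₁)
  intro x
  apply setIntegral_mono (hinner_int l₂ x hl₂) (hinner_int l₁ x hl₁)
  intro y
  exact hanti _ _ (by positivity) (mul_le_mul_of_nonneg_right hle (norm_nonneg _))
end

section
/- Let A₁ and A₂ be two (axis-parallel) squares in ℝ² with |A₁| ≤ |A₂|, and let γ : [0,∞) → ℝ be a bounded measurable nonnegative non-increasing function. Then (1/|A₂|²)·∫_{A₂×A₂} γ(‖s − t‖) ds dt ≤ (1/|A₁|²)·∫_{A₁×A₁} γ(‖s − t‖) ds dt. In other words, the spatial risk measure ℛ₁(·) attached to γ is anti-monotonic on squares. -/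
open MeasureTheory

/-- The axis-parallel square with lower-left corner `a` and side `R` in `ℝ²`. -/
def axisSquare (a : EuclideanSpace ℝ (Fin 2)) (R : ℝ) : Set (EuclideanSpace ℝ (Fin 2)) :=
  {x | ∀ i : Fin 2, x i ∈ Set.Icc (a i) (a i + R)}

open Set in
section

noncomputable abbrev E2 := EuclideanSpace ℝ (Fin 2)

lemma axisSquare_volume (a : E2) {R : ℝ} (hR : 0 ≤ R) :
    volume (axisSquare a R) = ENNReal.ofReal (R ^ 2) := by
  have h : axisSquare a R =
      ((MeasurableEquiv.toLp 2 (Fin 2 → ℝ)).symm) ⁻¹' (Set.univ.pi fun i => Set.Icc (a i) (a i + R)) := by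
    ext x; simp [axisSquare, Set.mem_pi, Pi.le_def, forall_and]
  rw [h, (EuclideanSpace.volume_preserving_symm_measurableEquiv_toLp (Fin 2)).measure_preimage
      (by measurability)]
  rw [volume_pi_pi]
  simp [Real.volume_Icc, ← ENNReal.ofReal_mul hR, sq]

lemma axisSquare_meas (a : E2) (R : ℝ) : MeasurableSet (axisSquare a R) := by
  have h : axisSquare a R = ⋂ i : Fin 2, {x : E2 | x i ∈ Set.Icc (a i) (a i + R)} := by
    ext x; simp [axisSquare]
  rw [h]
  exact MeasurableSet.iInter fun i =>
    measurableSet_Icc.preimage ((continuous_apply i).measurable.comp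
      (MeasurableEquiv.toLp 2 (Fin 2 → ℝ)).symm.measurable)

lemma mem_axisSquare_affine (a : E2) {R : ℝ} (hR : 0 < R) (y : E2) :
    a + R • y ∈ axisSquare a R ↔ y ∈ axisSquare 0 1 := by
  simp only [axisSquare, Set.mem_setOf_eq, Set.mem_Icc]
  refine forall_congr' fun i => ?_
  have happ : (a + R • y) i = a i + R * y i := rfl
  have h0 : (0 : E2) i = 0 := rfl
  rw [happ, h0]
  constructor
  · rintro ⟨h1, h2⟩
    constructor
    · nlinarith
    · nlinarith
  · rintro ⟨h1, h2⟩
    constructor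
    · nlinarith
    · nlinarith

lemma cov (a : E2) {R : ℝ} (hR : 0 < R) (f : E2 → ℝ) :
    ∫ x in axisSquare a R, f x = R ^ 2 * ∫ y in axisSquare 0 1, f (a + R • y) := by
  have key : ∫ y in axisSquare 0 1, f (a + R • y)
      = (R ^ 2)⁻¹ * ∫ x in axisSquare a R, f x := by
    calc ∫ y in axisSquare 0 1, f (a + R • y)
        = ∫ y, (axisSquare 0 1).indicator (fun y => f (a + R • y)) y :=
          (integral_indicator (axisSquare_meas 0 1)).symm
      _ = ∫ y, (fun z => (axisSquare a R).indicator f (a + z)) (R • y) := by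
          congr 1; funext y
          by_cases h : y ∈ axisSquare 0 1
          · simp [Set.indicator_of_mem h, Set.indicator_of_mem ((mem_axisSquare_affine a hR y).2 h)]
          · simp [Set.indicator_of_notMem h,
              Set.indicator_of_notMem (fun c => h ((mem_axisSquare_affine a hR y).1 c))]
      _ = (R ^ Module.finrank ℝ E2)⁻¹ • ∫ z, (axisSquare a R).indicator f (a + z) :=
          Measure.integral_comp_smul_of_nonneg volume (fun z => (axisSquare a R).indicator f (a + z)) R (hR := hR.le)
      _ = (R ^ 2)⁻¹ * ∫ x in axisSquare a R, f x := by
          rw [integral_add_left_eq_self, integral_indicator (axisSquare_meas a R)]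
          simp [finrank_euclideanSpace_fin, smul_eq_mul]
  rw [key]
  field_simp

lemma key_repr (a : E2) {R : ℝ} (hR : 0 < R) (γ : ℝ → ℝ) :
    ((volume (axisSquare a R)).toReal ^ 2)⁻¹ *
        (∫ s in axisSquare a R, ∫ t in axisSquare a R, γ ‖s - t‖)
      = ∫ u in axisSquare 0 1, ∫ v in axisSquare 0 1, γ (R * ‖u - v‖) := by
  have hnorm : ∀ u v : E2, ‖(a + R • u) - (a + R • v)‖ = R * ‖u - v‖ := by
    intro u v
    have : (a + R • u) - (a + R • v) = R • (u - v) := by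
      rw [smul_sub]; abel
    rw [this, norm_smul, Real.norm_eq_abs, abs_of_pos hR]
  have h1 : (∫ s in axisSquare a R, ∫ t in axisSquare a R, γ ‖s - t‖)
      = R ^ 2 * (R ^ 2 * ∫ u in axisSquare 0 1, ∫ v in axisSquare 0 1, γ (R * ‖u - v‖)) := by
    rw [cov a hR (fun s => ∫ t in axisSquare a R, γ ‖s - t‖)]
    congr 1
    rw [← integral_const_mul]
    refine setIntegral_congr_fun (axisSquare_meas 0 1) fun u _ => ?_
    rw [cov a hR (fun t => γ ‖(a + R • u) - t‖)]
    congr 1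
    refine setIntegral_congr_fun (axisSquare_meas 0 1) fun v _ => ?_
    rw [hnorm]
  rw [h1, axisSquare_volume a hR.le, ENNReal.toReal_ofReal (by positivity)]
  have hRne : (R : ℝ) ^ 2 ≠ 0 := by positivity
  field_simp

end

/-- Anti-monotonicity on squares of the spatial risk measure attached to a bounded
measurable nonnegative non-increasing `γ`: if `|A₁| ≤ |A₂|` then
`(1/|A₂|²)·∫_{A₂×A₂} γ(‖s-t‖) ≤ (1/|A₁|²)·∫_{A₁×A₁} γ(‖s-t‖)`. -/
theorem stmt_14 (a₁ a₂ : EuclideanSpace ℝ (Fin 2)) (R₁ R₂ : ℝ)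
    (hR₁ : 0 < R₁) (hR₂ : 0 < R₂)
    (hvol : volume (axisSquare a₁ R₁) ≤ volume (axisSquare a₂ R₂))
    (γ : ℝ → ℝ) (hmeas : Measurable γ)
    (hbdd : ∃ M, ∀ h : ℝ, 0 ≤ h → |γ h| ≤ M)
    (hpos : ∀ h : ℝ, 0 ≤ h → 0 ≤ γ h)
    (hanti : ∀ a b : ℝ, 0 ≤ a → a ≤ b → γ b ≤ γ a) :
    ((volume (axisSquare a₂ R₂)).toReal ^ 2)⁻¹ *
        (∫ s in axisSquare a₂ R₂, ∫ t in axisSquare a₂ R₂, γ ‖s - t‖)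
      ≤ ((volume (axisSquare a₁ R₁)).toReal ^ 2)⁻¹ *
          (∫ s in axisSquare a₁ R₁, ∫ t in axisSquare a₁ R₁, γ ‖s - t‖) := by
  rw [key_repr a₁ hR₁ γ, key_repr a₂ hR₂ γ]
  -- from hvol, R₁ ≤ R₂
  have hR12 : R₁ ≤ R₂ := by
    rw [axisSquare_volume a₁ hR₁.le, axisSquare_volume a₂ hR₂.le,
      ENNReal.ofReal_le_ofReal_iff (by positivity)] at hvol
    nlinarith
  obtain ⟨M, hM⟩ := hbdd
  set Q1 := axisSquare 0 1 with hQ1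
  set μ := volume.restrict Q1 with hμ
  haveI : IsFiniteMeasure μ := by
    constructor
    rw [hμ, Measure.restrict_apply_univ, hQ1, axisSquare_volume 0 (by norm_num)]
    exact ENNReal.ofReal_lt_top
  have hintF : ∀ R : ℝ, 0 < R → Integrable (fun p : E2 × E2 => γ (R * ‖p.1 - p.2‖)) (μ.prod μ) := by
    intro R hR
    have hm : Measurable fun p : E2 × E2 => γ (R * ‖p.1 - p.2‖) :=
      hmeas.comp (measurable_const.mul (measurable_fst.sub measurable_snd).norm)
    refine (integrable_const M).mono' hm.aestronglyMeasurable ?_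
    filter_upwards with p
    rw [Real.norm_eq_abs]
    exact hM _ (by positivity)
  have hintInner : ∀ (R : ℝ) (u : E2), 0 < R → Integrable (fun v => γ (R * ‖u - v‖)) μ := by
    intro R u hR
    have hm : Measurable fun v : E2 => γ (R * ‖u - v‖) :=
      hmeas.comp (measurable_const.mul (measurable_const.sub measurable_id).norm)
    refine (integrable_const M).mono' hm.aestronglyMeasurable ?_
    filter_upwards with v
    rw [Real.norm_eq_abs]
    exact hM _ (by positivity)
  have hintOuter : ∀ R : ℝ, 0 < R →
      Integrable (fun u => ∫ v, γ (R * ‖u - v‖) ∂μ) μ := by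
    intro R hR
    exact (hintF R hR).integral_prod_left
  refine integral_mono (hintOuter R₂ hR₂) (hintOuter R₁ hR₁) fun u => ?_
  refine integral_mono (hintInner R₂ u hR₂) (hintInner R₁ u hR₁) fun v => ?_
  exact hanti _ _ (by positivity) (mul_le_mul_of_nonneg_right hR12 (norm_nonneg _))
end

section
/- Let u ≥ 0 and let 0 ≤ ρ₁ ≤ ρ₂ < 1. Then ∫_{ℝ²} (x−u)⁺·(y−u)⁺ · f_{ρ₁}(x,y) dx dy ≤ ∫_{ℝ²} (x−u)⁺·(y−u)⁺ · f_{ρ₂}(x,y) dx dy; i.e. the covariance 𝒢 of the excess damage function of a standard bivariate normal pair is non-decreasing in the correlation on [0,1). -/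
open MeasureTheory

/-- Density of the standard bivariate normal distribution with correlation `ρ`. -/
noncomputable def bvnPDF (ρ x y : ℝ) : ℝ :=
  (2 * Real.pi * Real.sqrt (1 - ρ ^ 2))⁻¹ *
    Real.exp (-(x ^ 2 - 2 * ρ * x * y + y ^ 2) / (2 * (1 - ρ ^ 2)))

open Real


noncomputable def gpdf (t : ℝ) : ℝ := (Real.sqrt (2 * Real.pi))⁻¹ * Real.exp (-(1/2) * t ^ 2)

lemma sqrt_two_pi_pos : 0 < Real.sqrt (2 * Real.pi) :=
  Real.sqrt_pos.2 (by positivity)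

lemma gpdf_nonneg (t : ℝ) : 0 ≤ gpdf t := by
  unfold gpdf; positivity

lemma gpdf_le_exp (t : ℝ) : gpdf t ≤ Real.exp (-(1/2) * t ^ 2) := by
  unfold gpdf
  have h1 : (Real.sqrt (2 * Real.pi))⁻¹ ≤ 1 := by
    rw [inv_le_one_iff₀]
    right
    rw [show (1:ℝ) = Real.sqrt 1 by simp]
    exact Real.sqrt_le_sqrt (by nlinarith [Real.pi_gt_three])
  nlinarith [Real.exp_pos (-(1/2) * t ^ 2)]

lemma integrable_gpdf : Integrable gpdf :=
  (integrable_exp_neg_mul_sq (by norm_num : (0:ℝ) < 1/2)).const_mul _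

lemma integral_gpdf : ∫ t, gpdf t = 1 := by
  have h : ∫ t : ℝ, Real.exp (-(1/2) * t ^ 2) = Real.sqrt (2 * Real.pi) := by
    rw [integral_gaussian]
    norm_num
    ring
  unfold gpdf
  rw [integral_const_mul, h, inv_mul_cancel₀ (ne_of_gt sqrt_two_pi_pos)]

@[fun_prop]
lemma continuous_gpdf : Continuous gpdf := by
  unfold gpdf; fun_prop

lemma integrable_abs_gpdf : Integrable (fun t => |t| * gpdf t) := by
  have h := ((integrable_mul_exp_neg_mul_sq (by norm_num : (0:ℝ) < 1/2)).abs).const_mul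
      (Real.sqrt (2 * Real.pi))⁻¹
  refine h.congr (Filter.Eventually.of_forall fun t => ?_)
  show (Real.sqrt (2 * Real.pi))⁻¹ * |t * Real.exp (-(1/2) * t ^ 2)| = _
  unfold gpdf
  rw [abs_mul, abs_of_nonneg (Real.exp_pos _).le]
  ring

lemma integrable_sq_gpdf : Integrable (fun t => t ^ 2 * gpdf t) := by
  have key : ∀ t : ℝ, ‖t ^ 2 * gpdf t‖ ≤ 4 * Real.exp (-(1/4) * t ^ 2) := by
    intro t
    have h1 : t ^ 2 ≤ 4 * Real.exp ((1/4) * t ^ 2) := by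
      nlinarith [Real.add_one_le_exp ((1/4) * t ^ 2), sq_nonneg t]
    have h2 : gpdf t ≤ Real.exp (-(1/2) * t ^ 2) := gpdf_le_exp t
    have h3 : 0 ≤ gpdf t := gpdf_nonneg t
    rw [Real.norm_eq_abs, abs_of_nonneg (by positivity)]
    calc t ^ 2 * gpdf t ≤ (4 * Real.exp ((1/4) * t ^ 2)) * Real.exp (-(1/2) * t ^ 2) := by
          nlinarith [Real.exp_pos ((1/4) * t^2)]
      _ = 4 * Real.exp (-(1/4) * t ^ 2) := by
          rw [mul_assoc, ← Real.exp_add]; ring_nf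
  exact Integrable.mono' ((integrable_exp_neg_mul_sq (by norm_num : (0:ℝ) < 1/4)).const_mul 4)
    ((continuous_pow 2).mul continuous_gpdf).aestronglyMeasurable (Filter.Eventually.of_forall key)

lemma integrable_poly_gpdf (a b c : ℝ) :
    Integrable (fun t => (a + b * |t| + c * t ^ 2) * gpdf t) := by
  have : (fun t => (a + b * |t| + c * t ^ 2) * gpdf t)
      = fun t => a * gpdf t + b * (|t| * gpdf t) + c * (t ^ 2 * gpdf t) := by
    funext t; ring
  rw [this]
  exact ((integrable_gpdf.const_mul a).add (integrable_abs_gpdf.const_mul b)).add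
    (integrable_sq_gpdf.const_mul c)

lemma integrable_abs_mul_exp {b : ℝ} (hb : 0 < b) :
    Integrable (fun x : ℝ => |x| * Real.exp (-b * x ^ 2)) := by
  refine ((integrable_mul_exp_neg_mul_sq hb).abs).congr
    (Filter.Eventually.of_forall fun t => ?_)
  show |t * Real.exp (-b * t ^ 2)| = _
  rw [abs_mul, abs_of_nonneg (Real.exp_pos _).le]

lemma gpdf_mul_gpdf {p q p' q' : ℝ} (h : p ^ 2 + q ^ 2 = p' ^ 2 + q' ^ 2) :
    gpdf p * gpdf q = gpdf p' * gpdf q' := by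
  unfold gpdf
  rw [mul_mul_mul_comm, ← Real.exp_add, mul_mul_mul_comm, ← Real.exp_add]
  congr 2
  linarith

-- affine substitution, no hypotheses on s needed for mul_left version
lemma integral_comp_affine (g : ℝ → ℝ) (m s : ℝ) :
    ∫ t : ℝ, g (m + s * t) = |s|⁻¹ * ∫ x, g x := by
  have h1 : ∫ t : ℝ, g (m + s * t) = ∫ t : ℝ, (fun w => g (m + w)) (s * t) := rfl
  rw [h1, Measure.integral_comp_mul_left (fun w => g (m + w)) s]
  rw [show ∀ a : ℝ, |a⁻¹| = |a|⁻¹ from fun a => abs_inv a]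
  rw [smul_eq_mul]
  congr 1
  exact integral_add_left_eq_self (μ := volume) g m

lemma integral_comp_affine' (g : ℝ → ℝ) (m : ℝ) {s : ℝ} (hs : s ≠ 0) :
    ∫ x, g x = |s| * ∫ t : ℝ, g (m + s * t) := by
  rw [integral_comp_affine g m s, ← mul_assoc, mul_inv_cancel₀ (by simpa using hs), one_mul]

lemma integral_gpdf_shift (m : ℝ) {s : ℝ} (hs : s ≠ 0) :
    ∫ x : ℝ, gpdf ((x - m) / s) = |s| := by
  rw [integral_comp_affine' (fun x => gpdf ((x - m) / s)) m hs]
  have : ∀ t : ℝ, gpdf ((m + s * t - m) / s) = gpdf t := by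
    intro t; congr 1; field_simp; ring
  simp_rw [this, integral_gpdf, mul_one]

lemma quad_bound {a b r : ℝ} (hb : b ≠ 0) (hr : 0 < r) (hab : a ^ 2 + b ^ 2 = r ^ 2)
    (z x : ℝ) :
    (1 - |a| / r) * r ^ 2 / b ^ 2 * z ^ 2 + (1 - |a| / r) / b ^ 2 * x ^ 2
      ≤ z ^ 2 + ((x - a * z) / b) ^ 2 := by
  have hb2 : (0:ℝ) < b ^ 2 := by positivity
  have key : (1 - |a| / r) * (r ^ 2 * z ^ 2 + x ^ 2) ≤ b ^ 2 * z ^ 2 + (x - a * z) ^ 2 := by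
    have hbb : b ^ 2 = r ^ 2 - a ^ 2 := by linarith
    have e : b ^ 2 * z ^ 2 + (x - a * z) ^ 2 = r ^ 2 * z ^ 2 + x ^ 2 - 2 * a * x * z := by
      rw [hbb]; ring
    rw [e]
    have h1 : 2 * (r * |z|) * |x| ≤ r ^ 2 * z ^ 2 + x ^ 2 := by
      nlinarith [sq_nonneg (r * |z| - |x|), sq_abs z, sq_abs x]
    have h2 : 2 * a * x * z ≤ 2 * |a| * (|x| * |z|) := by
      calc 2 * a * x * z ≤ |2 * a * x * z| := le_abs_self _
        _ = 2 * |a| * (|x| * |z|) := by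
            rw [abs_mul, abs_mul, abs_mul]; simp [abs_of_nonneg]; ring
    have h3 : 2 * a * x * z ≤ |a| / r * (r ^ 2 * z ^ 2 + x ^ 2) := by
      calc 2 * a * x * z ≤ 2 * |a| * (|x| * |z|) := h2
        _ = |a| / r * (2 * (r * |z|) * |x|) := by field_simp
        _ ≤ |a| / r * (r ^ 2 * z ^ 2 + x ^ 2) := by
            apply mul_le_mul_of_nonneg_left h1 (by positivity)
    nlinarith [h3]
  have e2 : (1 - |a| / r) * r ^ 2 / b ^ 2 * z ^ 2 + (1 - |a| / r) / b ^ 2 * x ^ 2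
      = ((1 - |a| / r) * (r ^ 2 * z ^ 2 + x ^ 2)) / b ^ 2 := by ring
  have e3 : z ^ 2 + ((x - a * z) / b) ^ 2 = (b ^ 2 * z ^ 2 + (x - a * z) ^ 2) / b ^ 2 := by
    field_simp
  rw [e2, e3]
  gcongr

lemma rot (v a : ℝ) {b r : ℝ} (hb : b ≠ 0) (hr : 0 < r) (hab : a ^ 2 + b ^ 2 = r ^ 2) :
    ∫ z : ℝ, (∫ w : ℝ, max (v + (a * z + b * w)) 0 * gpdf w) * gpdf z
      = ∫ t : ℝ, max (v + r * t) 0 * gpdf t := by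
  have hra : |a| < r := by
    nlinarith [sq_abs a, abs_nonneg a, sq_pos_of_ne_zero hb]
  have hδ : 0 < 1 - |a| / r := by
    rw [sub_pos, div_lt_one hr]; exact hra
  set δ₁ := (1 - |a| / r) * r ^ 2 / b ^ 2 with hδ₁def
  set δ₂ := (1 - |a| / r) / b ^ 2 with hδ₂def
  have hδ₁ : 0 < δ₁ := by rw [hδ₁def]; positivity
  have hδ₂ : 0 < δ₂ := by rw [hδ₂def]; positivity
  set G : ℝ → ℝ → ℝ := fun z x =>
    |b|⁻¹ * (max (v + x) 0 * gpdf ((x - a * z) / b) * gpdf z) with hGdef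
  -- Step A: rewrite inner integral via substitution
  have hinner : ∀ z : ℝ, (∫ w : ℝ, max (v + (a * z + b * w)) 0 * gpdf w) * gpdf z
      = ∫ x : ℝ, G z x := by
    intro z
    have h1 : ∫ w : ℝ, max (v + (a * z + b * w)) 0 * gpdf w
        = |b|⁻¹ * ∫ x : ℝ, max (v + x) 0 * gpdf ((x - a * z) / b) := by
      rw [← integral_comp_affine (fun x => max (v + x) 0 * gpdf ((x - a * z) / b)) (a * z) b]
      refine integral_congr_ae (Filter.Eventually.of_forall fun w => ?_)
      have : (a * z + b * w - a * z) / b = w := by field_simp; ring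
      simp only [this]
    have h2 : ∫ x : ℝ, G z x
        = |b|⁻¹ * ((∫ x : ℝ, max (v + x) 0 * gpdf ((x - a * z) / b)) * gpdf z) := by
      rw [← integral_mul_const, ← integral_const_mul, hGdef]
    rw [h1, h2]
    ring
  simp_rw [hinner]
  -- Step B: Fubini
  have hint : Integrable (Function.uncurry G) (volume.prod volume) := by
    have hf₁ : Integrable (fun z : ℝ => |b|⁻¹ * Real.exp (-(δ₁ / 2) * z ^ 2)) := by
      exact (integrable_exp_neg_mul_sq (by positivity)).const_mul _
    have hf₂ : Integrable (fun x : ℝ => (|v| + |x|) * Real.exp (-(δ₂ / 2) * x ^ 2)) := by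
      have : (fun x : ℝ => (|v| + |x|) * Real.exp (-(δ₂ / 2) * x ^ 2))
          = fun x : ℝ => |v| * Real.exp (-(δ₂ / 2) * x ^ 2)
            + |x| * Real.exp (-(δ₂ / 2) * x ^ 2) := by funext x; ring
      rw [this]
      exact ((integrable_exp_neg_mul_sq (by positivity)).const_mul _).add
        (integrable_abs_mul_exp (by positivity))
    have hD : Integrable (fun p : ℝ × ℝ =>
        (|b|⁻¹ * Real.exp (-(δ₁ / 2) * p.1 ^ 2))
          * ((|v| + |p.2|) * Real.exp (-(δ₂ / 2) * p.2 ^ 2))) (volume.prod volume) :=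
      hf₁.mul_prod hf₂
    refine hD.mono' ?_ (Filter.Eventually.of_forall fun p => ?_)
    · apply Continuous.aestronglyMeasurable
      rw [hGdef]
      fun_prop
    · rcases p with ⟨z, x⟩
      have hGnn : 0 ≤ G z x := by
        rw [hGdef]
        have := gpdf_nonneg ((x - a * z) / b)
        have := gpdf_nonneg z
        positivity
      rw [Function.uncurry, Real.norm_eq_abs, abs_of_nonneg hGnn]
      have hmax : max (v + x) 0 ≤ |v| + |x| := by
        apply max_le
        · calc v + x ≤ |v + x| := le_abs_self _
            _ ≤ |v| + |x| := abs_add_le _ _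
        · positivity
      have hexp : gpdf ((x - a * z) / b) * gpdf z
          ≤ Real.exp (-(δ₁ / 2) * z ^ 2) * Real.exp (-(δ₂ / 2) * x ^ 2) := by
        calc gpdf ((x - a * z) / b) * gpdf z
            ≤ Real.exp (-(1/2) * ((x - a * z) / b) ^ 2) * Real.exp (-(1/2) * z ^ 2) := by
              apply mul_le_mul (gpdf_le_exp _) (gpdf_le_exp _) (gpdf_nonneg _)
                (Real.exp_pos _).le
          _ = Real.exp (-(1/2) * (z ^ 2 + ((x - a * z) / b) ^ 2)) := by
              rw [← Real.exp_add]; ring_nf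
          _ ≤ Real.exp (-(δ₁ / 2) * z ^ 2 + -(δ₂ / 2) * x ^ 2) := by
              apply Real.exp_le_exp.2
              have := quad_bound hb hr hab z x
              rw [hδ₁def, hδ₂def] at *
              nlinarith [this]
          _ = Real.exp (-(δ₁ / 2) * z ^ 2) * Real.exp (-(δ₂ / 2) * x ^ 2) := by
              rw [← Real.exp_add]
      rw [hGdef]
      simp only
      calc |b|⁻¹ * (max (v + x) 0 * gpdf ((x - a * z) / b) * gpdf z)
          = |b|⁻¹ * (max (v + x) 0 * (gpdf ((x - a * z) / b) * gpdf z)) := by ring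
        _ ≤ |b|⁻¹ * ((|v| + |x|) * (Real.exp (-(δ₁ / 2) * z ^ 2)
              * Real.exp (-(δ₂ / 2) * x ^ 2))) := by
            apply mul_le_mul_of_nonneg_left _ (by positivity)
            apply mul_le_mul hmax hexp
              (mul_nonneg (gpdf_nonneg _) (gpdf_nonneg _)) (by positivity)
        _ = |b|⁻¹ * Real.exp (-(δ₁ / 2) * z ^ 2)
              * ((|v| + |x|) * Real.exp (-(δ₂ / 2) * x ^ 2)) := by ring
  rw [integral_integral_swap hint]
  -- Step C: inner z-integral
  have hz : ∀ x : ℝ, (∫ z : ℝ, G z x) = max (v + x) 0 * gpdf (x / r) * r⁻¹ := by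
    intro x
    have hid : ∀ z : ℝ, gpdf ((x - a * z) / b) * gpdf z
        = gpdf (x / r) * gpdf ((z - a * x / r ^ 2) / (b / r)) := by
      intro z
      apply gpdf_mul_gpdf
      have hr' : r ≠ 0 := ne_of_gt hr
      field_simp
      linear_combination (z ^ 2 * r ^ 2 - x ^ 2) * hab
    have e1 : ∀ z : ℝ, G z x
        = (|b|⁻¹ * (max (v + x) 0 * gpdf (x / r))) * gpdf ((z - a * x / r ^ 2) / (b / r)) := by
      intro z
      rw [hGdef]
      simp only
      rw [show max (v + x) 0 * gpdf ((x - a * z) / b) * gpdf z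
          = max (v + x) 0 * (gpdf ((x - a * z) / b) * gpdf z) by ring, hid z]
      ring
    simp_rw [e1]
    rw [integral_const_mul]
    rw [integral_gpdf_shift (a * x / r ^ 2) (div_ne_zero hb (ne_of_gt hr))]
    rw [abs_div, abs_of_pos hr]
    field_simp
  simp_rw [hz]
  -- Step D: final substitution x = r t
  rw [integral_comp_affine' (fun x => max (v + x) 0 * gpdf (x / r) * r⁻¹) 0 (ne_of_gt hr)]
  have e2 : ∀ t : ℝ, max (v + (0 + r * t)) 0 * gpdf ((0 + r * t) / r) * r⁻¹
      = max (v + r * t) 0 * gpdf t * r⁻¹ := by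
    intro t
    rw [zero_add, mul_div_cancel_left₀ _ (ne_of_gt hr)]
  simp_rw [e2]
  rw [integral_mul_const, abs_of_pos hr]
  field_simp

noncomputable def condMean (α β u y : ℝ) : ℝ := ∫ t : ℝ, max (α * y + β * t - u) 0 * gpdf t

lemma condMean_def (α β u y : ℝ) :
    condMean α β u y = ∫ t : ℝ, max (α * y + β * t - u) 0 * gpdf t := rfl

noncomputable def M1 : ℝ := ∫ t : ℝ, |t| * gpdf t

lemma M1_nonneg : 0 ≤ M1 :=
  integral_nonneg fun t => mul_nonneg (abs_nonneg t) (gpdf_nonneg t)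

lemma integrable_cm (α β u y : ℝ) :
    Integrable (fun t => max (α * y + β * t - u) 0 * gpdf t) := by
  have h : Integrable (fun t : ℝ => (|α * y - u| + |β| * |t| + 0 * t ^ 2) * gpdf t) :=
    integrable_poly_gpdf _ _ _
  refine h.mono' (Continuous.aestronglyMeasurable (by fun_prop)) (Filter.Eventually.of_forall fun t => ?_)
  rw [Real.norm_eq_abs, abs_of_nonneg (mul_nonneg (le_max_right _ _) (gpdf_nonneg t))]
  apply mul_le_mul_of_nonneg_right _ (gpdf_nonneg t)
  apply max_le
  · calc α * y + β * t - u = (α * y - u) + β * t := by ring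
      _ ≤ |(α * y - u) + β * t| := le_abs_self _
      _ ≤ |α * y - u| + |β * t| := abs_add_le _ _
      _ = |α * y - u| + |β| * |t| + 0 * t ^ 2 := by rw [abs_mul]; ring
  · positivity

lemma cm_nonneg (α β u y : ℝ) : 0 ≤ condMean α β u y :=
  integral_nonneg fun t => mul_nonneg (le_max_right _ _) (gpdf_nonneg t)

lemma cm_le (α β u y : ℝ) : condMean α β u y ≤ (|α| * |y| + |u|) + |β| * M1 := by
  have hInt2 : Integrable (fun t : ℝ => (|α| * |y| + |u|) * gpdf t + |β| * (|t| * gpdf t)) :=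
    (integrable_gpdf.const_mul _).add (integrable_abs_gpdf.const_mul _)
  have hle : ∀ t : ℝ, max (α * y + β * t - u) 0 * gpdf t
      ≤ (|α| * |y| + |u|) * gpdf t + |β| * (|t| * gpdf t) := by
    intro t
    have h1 : max (α * y + β * t - u) 0 ≤ |α| * |y| + |u| + |β| * |t| := by
      apply max_le
      · calc α * y + β * t - u ≤ |α * y + β * t - u| := le_abs_self _
          _ ≤ |α * y + β * t| + |u| := abs_sub _ _
          _ ≤ |α * y| + |β * t| + |u| := by linarith [abs_add_le (α * y) (β * t)]
          _ = |α| * |y| + |u| + |β| * |t| := by rw [abs_mul, abs_mul]; ring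
      · positivity
    calc max (α * y + β * t - u) 0 * gpdf t
        ≤ (|α| * |y| + |u| + |β| * |t|) * gpdf t :=
          mul_le_mul_of_nonneg_right h1 (gpdf_nonneg t)
      _ = (|α| * |y| + |u|) * gpdf t + |β| * (|t| * gpdf t) := by ring
  calc condMean α β u y ≤ ∫ t : ℝ, ((|α| * |y| + |u|) * gpdf t + |β| * (|t| * gpdf t)) :=
        integral_mono (integrable_cm α β u y) hInt2 hle
    _ = (|α| * |y| + |u|) + |β| * M1 := by
        rw [integral_add (integrable_gpdf.const_mul _) (integrable_abs_gpdf.const_mul _),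
          integral_const_mul, integral_const_mul, integral_gpdf, mul_one, M1]

lemma cm_mono {α : ℝ} (β u : ℝ) (hα : 0 ≤ α) : Monotone (fun y => condMean α β u y) := by
  intro y₁ y₂ h
  apply integral_mono (integrable_cm α β u y₁) (integrable_cm α β u y₂)
  intro t
  apply mul_le_mul_of_nonneg_right _ (gpdf_nonneg t)
  apply max_le_max _ le_rfl
  have : α * y₁ ≤ α * y₂ := mul_le_mul_of_nonneg_left h hα
  linarith

lemma cm_lip {α : ℝ} (β u : ℝ) (hα : 0 ≤ α) {y₁ y₂ : ℝ} (h : y₁ ≤ y₂) :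
    condMean α β u y₂ ≤ condMean α β u y₁ + α * (y₂ - y₁) := by
  have hd : 0 ≤ α * (y₂ - y₁) := mul_nonneg hα (by linarith)
  have hle : ∀ t : ℝ, max (α * y₂ + β * t - u) 0 * gpdf t
      ≤ max (α * y₁ + β * t - u) 0 * gpdf t + (α * (y₂ - y₁)) * gpdf t := by
    intro t
    have h1 : max (α * y₂ + β * t - u) 0 ≤ max (α * y₁ + β * t - u) 0 + α * (y₂ - y₁) := by
      apply max_le
      · have : α * y₂ + β * t - u = (α * y₁ + β * t - u) + α * (y₂ - y₁) := by ring
        rw [this]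
        linarith [le_max_left (α * y₁ + β * t - u) 0]
      · have := le_max_right (α * y₁ + β * t - u) 0
        linarith
    calc max (α * y₂ + β * t - u) 0 * gpdf t
        ≤ (max (α * y₁ + β * t - u) 0 + α * (y₂ - y₁)) * gpdf t :=
          mul_le_mul_of_nonneg_right h1 (gpdf_nonneg t)
      _ = max (α * y₁ + β * t - u) 0 * gpdf t + (α * (y₂ - y₁)) * gpdf t := by ring
  calc condMean α β u y₂
      ≤ ∫ t : ℝ, (max (α * y₁ + β * t - u) 0 * gpdf t + (α * (y₂ - y₁)) * gpdf t) :=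
        integral_mono (integrable_cm α β u y₂)
          ((integrable_cm α β u y₁).add (integrable_gpdf.const_mul _)) hle
    _ = condMean α β u y₁ + α * (y₂ - y₁) := by
        rw [integral_add (integrable_cm α β u y₁) (integrable_gpdf.const_mul _),
          integral_const_mul, integral_gpdf, mul_one, condMean]

lemma bvn_factor {ρ : ℝ} (hρ : ρ ^ 2 < 1) (x y : ℝ) :
    bvnPDF ρ x y = gpdf x *
      ((Real.sqrt (1 - ρ ^ 2))⁻¹ * gpdf ((y - ρ * x) / Real.sqrt (1 - ρ ^ 2))) := by
  set σ := Real.sqrt (1 - ρ ^ 2) with hσdef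
  have h1ρ : (0:ℝ) < 1 - ρ ^ 2 := by linarith
  have hσpos : 0 < σ := Real.sqrt_pos.2 h1ρ
  have hσsq : σ ^ 2 = 1 - ρ ^ 2 := Real.sq_sqrt h1ρ.le
  have h2π : Real.sqrt (2 * Real.pi) ^ 2 = 2 * Real.pi := Real.sq_sqrt (by positivity)
  have hs2π : (0:ℝ) < Real.sqrt (2 * Real.pi) := sqrt_two_pi_pos
  unfold bvnPDF gpdf
  have hconst : (2 * Real.pi * σ)⁻¹
      = (Real.sqrt (2 * Real.pi))⁻¹ * (σ⁻¹ * (Real.sqrt (2 * Real.pi))⁻¹) := by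
    rw [← mul_inv, ← mul_inv]
    congr 1
    nlinarith [h2π]
  have hexp : -(x ^ 2 - 2 * ρ * x * y + y ^ 2) / (2 * (1 - ρ ^ 2))
      = -(1/2) * x ^ 2 + -(1/2) * ((y - ρ * x) / σ) ^ 2 := by
    rw [div_pow, hσsq]
    field_simp
    ring
  rw [hconst, hexp, Real.exp_add]
  ring

lemma gpdf_swap {ρ : ℝ} (hρ : ρ ^ 2 < 1) (x y : ℝ) :
    gpdf x * gpdf ((y - ρ * x) / Real.sqrt (1 - ρ ^ 2))
      = gpdf y * gpdf ((x - ρ * y) / Real.sqrt (1 - ρ ^ 2)) := by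
  have h1ρ : (0:ℝ) < 1 - ρ ^ 2 := by linarith
  have hσpos : 0 < Real.sqrt (1 - ρ ^ 2) := Real.sqrt_pos.2 h1ρ
  have hσsq : Real.sqrt (1 - ρ ^ 2) ^ 2 = 1 - ρ ^ 2 := Real.sq_sqrt h1ρ.le
  apply gpdf_mul_gpdf
  rw [div_pow, div_pow, hσsq]
  field_simp
  ring

lemma integrable_bvn_weighted {ρ : ℝ} (hρ0 : 0 ≤ ρ) (hρ1 : ρ < 1) {u : ℝ} (hu : 0 ≤ u) :
    Integrable (fun p : ℝ × ℝ => max (p.1 - u) 0 * max (p.2 - u) 0 * bvnPDF ρ p.1 p.2)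
      (volume.prod volume) := by
  have h1ρ : (0:ℝ) < 1 - ρ ^ 2 := by nlinarith
  have hσpos : 0 < Real.sqrt (1 - ρ ^ 2) := Real.sqrt_pos.2 h1ρ
  set k := (2 * (1 + ρ))⁻¹ with hkdef
  have hk : 0 < k := by rw [hkdef]; positivity
  set c := (2 * Real.pi * Real.sqrt (1 - ρ ^ 2))⁻¹ with hcdef
  have hc : 0 < c := by rw [hcdef]; positivity
  have hf₁ : Integrable (fun x : ℝ => c * ((|x| + u) * Real.exp (-k * x ^ 2))) := by
    apply Integrable.const_mul
    have : (fun x : ℝ => (|x| + u) * Real.exp (-k * x ^ 2))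
        = fun x : ℝ => |x| * Real.exp (-k * x ^ 2) + u * Real.exp (-k * x ^ 2) := by
      funext x; ring
    rw [this]
    exact (integrable_abs_mul_exp hk).add ((integrable_exp_neg_mul_sq hk).const_mul u)
  have hf₂ : Integrable (fun y : ℝ => (|y| + u) * Real.exp (-k * y ^ 2)) := by
    have : (fun y : ℝ => (|y| + u) * Real.exp (-k * y ^ 2))
        = fun y : ℝ => |y| * Real.exp (-k * y ^ 2) + u * Real.exp (-k * y ^ 2) := by
      funext y; ring
    rw [this]
    exact (integrable_abs_mul_exp hk).add ((integrable_exp_neg_mul_sq hk).const_mul u)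
  refine (hf₁.mul_prod hf₂).mono' (Continuous.aestronglyMeasurable ?_)
    (Filter.Eventually.of_forall fun p => ?_)
  · unfold bvnPDF; fun_prop
  · rcases p with ⟨x, y⟩
    simp only
    have hbnn : 0 ≤ bvnPDF ρ x y := by
      unfold bvnPDF; positivity
    have hm1 : max (x - u) 0 ≤ |x| + u := by
      apply max_le _ (by positivity)
      calc x - u ≤ x := by linarith
        _ ≤ |x| := le_abs_self x
        _ ≤ |x| + u := by linarith
    have hm2 : max (y - u) 0 ≤ |y| + u := by
      apply max_le _ (by positivity)
      calc y - u ≤ y := by linarith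
        _ ≤ |y| := le_abs_self y
        _ ≤ |y| + u := by linarith
    have hbvn : bvnPDF ρ x y ≤ c * (Real.exp (-k * x ^ 2) * Real.exp (-k * y ^ 2)) := by
      unfold bvnPDF
      rw [← hcdef, ← Real.exp_add]
      apply mul_le_mul_of_nonneg_left _ hc.le
      apply Real.exp_le_exp.2
      rw [div_le_iff₀ (by linarith : (0:ℝ) < 2 * (1 - ρ ^ 2))]
      have hq : (1 - ρ) * (x ^ 2 + y ^ 2) ≤ x ^ 2 - 2 * ρ * x * y + y ^ 2 := by
        nlinarith [sq_nonneg (x - y), sq_nonneg (x + y)]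
      have hk2 : (-k * x ^ 2 + -k * y ^ 2) * (2 * (1 - ρ ^ 2))
          = -((1 - ρ) * (x ^ 2 + y ^ 2)) := by
        rw [hkdef]
        field_simp
        ring
      rw [hk2]
      linarith
    rw [Real.norm_eq_abs, abs_of_nonneg (by positivity)]
    calc max (x - u) 0 * max (y - u) 0 * bvnPDF ρ x y
        ≤ ((|x| + u) * (|y| + u)) * (c * (Real.exp (-k * x ^ 2) * Real.exp (-k * y ^ 2))) := by
          apply mul_le_mul _ hbvn hbnn (by positivity)
          apply mul_le_mul hm1 hm2 (le_max_right _ _) (by positivity)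
      _ = c * ((|x| + u) * Real.exp (-k * x ^ 2)) * ((|y| + u) * Real.exp (-k * y ^ 2)) := by
          ring

lemma reduce {ρ : ℝ} (hρ0 : 0 ≤ ρ) (hρ1 : ρ < 1) {u : ℝ} (hu : 0 ≤ u) :
    ∫ p : ℝ × ℝ, max (p.1 - u) 0 * max (p.2 - u) 0 * bvnPDF ρ p.1 p.2
      = ∫ x : ℝ, max (x - u) 0 * gpdf x * condMean ρ (Real.sqrt (1 - ρ ^ 2)) u x := by
  have h1ρ : (0:ℝ) < 1 - ρ ^ 2 := by nlinarith
  have hρsq : ρ ^ 2 < 1 := by linarith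
  set σ := Real.sqrt (1 - ρ ^ 2) with hσdef
  have hσpos : 0 < σ := Real.sqrt_pos.2 h1ρ
  rw [Measure.volume_eq_prod, integral_prod _ (integrable_bvn_weighted hρ0 hρ1 hu)]
  refine integral_congr_ae (Filter.Eventually.of_forall fun x => ?_)
  simp only
  have hpt : ∀ y : ℝ, max (x - u) 0 * max (y - u) 0 * bvnPDF ρ x y
      = (max (x - u) 0 * gpdf x * σ⁻¹) * (max (y - u) 0 * gpdf ((y - ρ * x) / σ)) := by
    intro y
    rw [bvn_factor hρsq x y, ← hσdef]
    ring
  simp_rw [hpt]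
  rw [integral_const_mul]
  have hsub : ∫ y : ℝ, max (y - u) 0 * gpdf ((y - ρ * x) / σ)
      = σ * condMean ρ σ u x := by
    rw [integral_comp_affine' (fun y => max (y - u) 0 * gpdf ((y - ρ * x) / σ)) (ρ * x)
      (ne_of_gt hσpos), abs_of_pos hσpos]
    unfold condMean
    congr 1
    refine integral_congr_ae (Filter.Eventually.of_forall fun t => ?_)
    show max (ρ * x + σ * t - u) 0 * gpdf ((ρ * x + σ * t - ρ * x) / σ) = _
    have : (ρ * x + σ * t - ρ * x) / σ = t := by field_simp; ring
    rw [this]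
  rw [hsub]
  field_simp

lemma dom_integrable {a b r : ℝ} (hb : b ≠ 0) (hr : 0 < r) (hab : a ^ 2 + b ^ 2 = r ^ 2)
    {A₁ B₁ A₂ B₂ : ℝ} (hA₁ : 0 ≤ A₁) (hB₁ : 0 ≤ B₁) (hA₂ : 0 ≤ A₂) (hB₂ : 0 ≤ B₂)
    {F : ℝ × ℝ → ℝ} (hF : AEStronglyMeasurable F (volume.prod volume))
    (hbd : ∀ p : ℝ × ℝ, ‖F p‖ ≤ (A₁ + B₁ * |p.1|) *
      ((A₂ + B₂ * |p.2|) * (gpdf p.1 * gpdf ((p.2 - a * p.1) / b)))) :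
    Integrable F (volume.prod volume) := by
  have hra : |a| < r := by
    nlinarith [sq_abs a, abs_nonneg a, sq_pos_of_ne_zero hb]
  have hδ : 0 < 1 - |a| / r := by
    rw [sub_pos, div_lt_one hr]; exact hra
  set δ₁ := (1 - |a| / r) * r ^ 2 / b ^ 2 with hδ₁def
  set δ₂ := (1 - |a| / r) / b ^ 2 with hδ₂def
  have hδ₁ : 0 < δ₁ := by rw [hδ₁def]; positivity
  have hδ₂ : 0 < δ₂ := by rw [hδ₂def]; positivity
  have hf₁ : Integrable (fun x : ℝ => (A₁ + B₁ * |x|) * Real.exp (-(δ₁ / 2) * x ^ 2)) := by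
    have : (fun x : ℝ => (A₁ + B₁ * |x|) * Real.exp (-(δ₁ / 2) * x ^ 2))
        = fun x : ℝ => A₁ * Real.exp (-(δ₁ / 2) * x ^ 2)
          + B₁ * (|x| * Real.exp (-(δ₁ / 2) * x ^ 2)) := by funext x; ring
    rw [this]
    exact ((integrable_exp_neg_mul_sq (by positivity)).const_mul _).add
      ((integrable_abs_mul_exp (by positivity)).const_mul _)
  have hf₂ : Integrable (fun y : ℝ => (A₂ + B₂ * |y|) * Real.exp (-(δ₂ / 2) * y ^ 2)) := by
    have : (fun y : ℝ => (A₂ + B₂ * |y|) * Real.exp (-(δ₂ / 2) * y ^ 2))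
        = fun y : ℝ => A₂ * Real.exp (-(δ₂ / 2) * y ^ 2)
          + B₂ * (|y| * Real.exp (-(δ₂ / 2) * y ^ 2)) := by funext y; ring
    rw [this]
    exact ((integrable_exp_neg_mul_sq (by positivity)).const_mul _).add
      ((integrable_abs_mul_exp (by positivity)).const_mul _)
  refine (hf₁.mul_prod hf₂).mono' hF (Filter.Eventually.of_forall fun p => ?_)
  rcases p with ⟨x, y⟩
  simp only
  have hexp : gpdf x * gpdf ((y - a * x) / b)
      ≤ Real.exp (-(δ₁ / 2) * x ^ 2) * Real.exp (-(δ₂ / 2) * y ^ 2) := by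
    calc gpdf x * gpdf ((y - a * x) / b)
        ≤ Real.exp (-(1/2) * x ^ 2) * Real.exp (-(1/2) * ((y - a * x) / b) ^ 2) :=
          mul_le_mul (gpdf_le_exp _) (gpdf_le_exp _) (gpdf_nonneg _) (Real.exp_pos _).le
      _ = Real.exp (-(1/2) * (x ^ 2 + ((y - a * x) / b) ^ 2)) := by
          rw [← Real.exp_add]; ring_nf
      _ ≤ Real.exp (-(δ₁ / 2) * x ^ 2 + -(δ₂ / 2) * y ^ 2) := by
          apply Real.exp_le_exp.2
          have := quad_bound hb hr hab x y
          rw [hδ₁def, hδ₂def] at *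
          nlinarith [this]
      _ = Real.exp (-(δ₁ / 2) * x ^ 2) * Real.exp (-(δ₂ / 2) * y ^ 2) := by
          rw [← Real.exp_add]
  calc ‖F (x, y)‖ ≤ (A₁ + B₁ * |x|) * ((A₂ + B₂ * |y|) * (gpdf x * gpdf ((y - a * x) / b))) :=
        hbd (x, y)
    _ ≤ (A₁ + B₁ * |x|) * ((A₂ + B₂ * |y|)
          * (Real.exp (-(δ₁ / 2) * x ^ 2) * Real.exp (-(δ₂ / 2) * y ^ 2))) := by
        apply mul_le_mul_of_nonneg_left _ (by positivity)
        exact mul_le_mul_of_nonneg_left hexp (by positivity)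
    _ = (A₁ + B₁ * |x|) * Real.exp (-(δ₁ / 2) * x ^ 2)
          * ((A₂ + B₂ * |y|) * Real.exp (-(δ₂ / 2) * y ^ 2)) := by ring

lemma cm_as_integral {ρ : ℝ} (hρsq : ρ ^ 2 < 1) (u y : ℝ) :
    ∫ x : ℝ, max (x - u) 0 * gpdf ((x - ρ * y) / Real.sqrt (1 - ρ ^ 2))
      = Real.sqrt (1 - ρ ^ 2) * condMean ρ (Real.sqrt (1 - ρ ^ 2)) u y := by
  have h1ρ : (0:ℝ) < 1 - ρ ^ 2 := by linarith
  set σ := Real.sqrt (1 - ρ ^ 2) with hσdef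
  have hσpos : 0 < σ := Real.sqrt_pos.2 h1ρ
  rw [integral_comp_affine' (fun x => max (x - u) 0 * gpdf ((x - ρ * y) / σ)) (ρ * y)
    (ne_of_gt hσpos), abs_of_pos hσpos]
  unfold condMean
  congr 1
  refine integral_congr_ae (Filter.Eventually.of_forall fun t => ?_)
  show max (ρ * y + σ * t - u) 0 * gpdf ((ρ * y + σ * t - ρ * y) / σ) = _
  have : (ρ * y + σ * t - ρ * y) / σ = t := by field_simp; ring
  rw [this]

lemma integrable_pp_gpdf {u : ℝ} (hu : 0 ≤ u) :
    Integrable (fun y : ℝ => max (y - u) 0 * gpdf y) := by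
  refine (integrable_poly_gpdf u 1 0).mono'
    (Continuous.aestronglyMeasurable (by fun_prop)) (Filter.Eventually.of_forall fun y => ?_)
  rw [Real.norm_eq_abs, abs_of_nonneg (mul_nonneg (le_max_right _ _) (gpdf_nonneg y))]
  apply mul_le_mul_of_nonneg_right _ (gpdf_nonneg y)
  apply max_le
  · have := le_abs_self y
    nlinarith [sq_nonneg y]
  · have := abs_nonneg y
    nlinarith [sq_nonneg y]

lemma integrable_cmf_gpdf {α : ℝ} (β u : ℝ) (hα : 0 ≤ α) :
    Integrable (fun y : ℝ => condMean α β u y * gpdf y) := by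
  refine (integrable_poly_gpdf (|u| + |β| * M1) (|α|) 0).mono'
    (((cm_mono β u hα).measurable.mul continuous_gpdf.measurable).aestronglyMeasurable)
    (Filter.Eventually.of_forall fun y => ?_)
  rw [Real.norm_eq_abs, abs_of_nonneg (mul_nonneg (cm_nonneg _ _ _ _) (gpdf_nonneg y))]
  apply mul_le_mul_of_nonneg_right _ (gpdf_nonneg y)
  have := cm_le α β u y
  nlinarith [sq_nonneg y]

lemma zero_int {c s u : ℝ} (hc0 : 0 ≤ c) (hu : 0 ≤ u) (hs : s ≠ 0)
    (hcs : c ^ 2 + s ^ 2 = 1) :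
    ∫ y : ℝ, (max (y - u) 0 - condMean c s u y) * gpdf y = 0 := by
  have i1 : Integrable (fun y : ℝ => max (y - u) 0 * gpdf y) := integrable_pp_gpdf hu
  have i2 : Integrable (fun y : ℝ => condMean c s u y * gpdf y) := integrable_cmf_gpdf s u hc0
  have e : (fun y : ℝ => (max (y - u) 0 - condMean c s u y) * gpdf y)
      = fun y : ℝ => max (y - u) 0 * gpdf y - condMean c s u y * gpdf y := by
    funext y; ring
  rw [e, integral_sub i1 i2, sub_eq_zero]
  have hrot := rot (-u) c (b := s) hs one_pos (by linarith : c ^ 2 + s ^ 2 = 1 ^ 2)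
  have el : ∀ z : ℝ, (∫ w : ℝ, max (-u + (c * z + s * w)) 0 * gpdf w) * gpdf z
      = condMean c s u z * gpdf z := by
    intro z
    congr 1
    unfold condMean
    refine integral_congr_ae (Filter.Eventually.of_forall fun w => ?_)
    simp only
    rw [show -u + (c * z + s * w) = c * z + s * w - u by ring]
  have er : ∀ t : ℝ, max (-u + 1 * t) 0 * gpdf t = max (t - u) 0 * gpdf t := by
    intro t
    rw [show -u + 1 * t = t - u by ring]
  calc ∫ y : ℝ, max (y - u) 0 * gpdf y
      = ∫ t : ℝ, max (-u + 1 * t) 0 * gpdf t :=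
        (integral_congr_ae (Filter.Eventually.of_forall fun t => er t)).symm
    _ = ∫ z : ℝ, (∫ w : ℝ, max (-u + (c * z + s * w)) 0 * gpdf w) * gpdf z := hrot.symm
    _ = ∫ z : ℝ, condMean c s u z * gpdf z :=
        integral_congr_ae (Filter.Eventually.of_forall fun z => el z)

lemma exchange {ρ : ℝ} (hρ0 : 0 ≤ ρ) (hρ1 : ρ < 1) {u : ℝ} (hu : 0 ≤ u)
    {Ψ : ℝ → ℝ} (hΨmeas : Measurable Ψ) {A B : ℝ} (hA : 0 ≤ A) (hB : 0 ≤ B)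
    (hΨb : ∀ y, |Ψ y| ≤ A + B * |y|) :
    ∫ x : ℝ, max (x - u) 0 * gpdf x
        * (∫ z : ℝ, Ψ (ρ * x + Real.sqrt (1 - ρ ^ 2) * z) * gpdf z)
      = ∫ y : ℝ, Ψ y * gpdf y * condMean ρ (Real.sqrt (1 - ρ ^ 2)) u y := by
  have h1ρ : (0:ℝ) < 1 - ρ ^ 2 := by nlinarith
  have hρsq : ρ ^ 2 < 1 := by linarith
  set σ := Real.sqrt (1 - ρ ^ 2) with hσdef
  have hσpos : 0 < σ := Real.sqrt_pos.2 h1ρ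
  have hσne : σ ≠ 0 := ne_of_gt hσpos
  have hσsq : σ ^ 2 = 1 - ρ ^ 2 := Real.sq_sqrt h1ρ.le
  have hab : ρ ^ 2 + σ ^ 2 = 1 ^ 2 := by rw [hσsq]; ring
  set Φ : ℝ → ℝ → ℝ := fun x y =>
    (max (x - u) 0 * gpdf x * σ⁻¹) * (Ψ y * gpdf ((y - ρ * x) / σ)) with hΦdef
  -- step i : inner substitution
  have stepi : ∀ x : ℝ, (∫ z : ℝ, Ψ (ρ * x + σ * z) * gpdf z)
      = σ⁻¹ * ∫ y : ℝ, Ψ y * gpdf ((y - ρ * x) / σ) := by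
    intro x
    have e := integral_comp_affine' (fun y => Ψ y * gpdf ((y - ρ * x) / σ)) (ρ * x) hσne
    have e2 : ∀ z : ℝ, Ψ (ρ * x + σ * z) * gpdf ((ρ * x + σ * z - ρ * x) / σ)
        = Ψ (ρ * x + σ * z) * gpdf z := by
      intro z
      rw [show (ρ * x + σ * z - ρ * x) / σ = z by field_simp; ring]
    beta_reduce at e
    simp_rw [e2] at e
    rw [e, abs_of_pos hσpos, ← mul_assoc, inv_mul_cancel₀ hσne, one_mul]
  -- step ii : to iterated double integral
  have stepii : ∀ x : ℝ, max (x - u) 0 * gpdf x * (∫ z : ℝ, Ψ (ρ * x + σ * z) * gpdf z)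
      = ∫ y : ℝ, Φ x y := by
    intro x
    rw [stepi x]
    rw [show max (x - u) 0 * gpdf x * (σ⁻¹ * ∫ y : ℝ, Ψ y * gpdf ((y - ρ * x) / σ))
        = (max (x - u) 0 * gpdf x * σ⁻¹) * ∫ y : ℝ, Ψ y * gpdf ((y - ρ * x) / σ) from by ring]
    exact (integral_const_mul _ _).symm
  simp_rw [stepii]
  -- step iii : Fubini
  have hInt : Integrable (Function.uncurry Φ) (volume.prod volume) := by
    refine dom_integrable hσne one_pos hab (A₁ := σ⁻¹ * u) (B₁ := σ⁻¹) (A₂ := A) (B₂ := B)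
      (by positivity) (by positivity) hA hB ?_ ?_
    · apply Measurable.aestronglyMeasurable
      have heq : Function.uncurry Φ = fun p : ℝ × ℝ =>
          (max (p.1 - u) 0 * gpdf p.1 * σ⁻¹) * (Ψ p.2 * gpdf ((p.2 - ρ * p.1) / σ)) := rfl
      rw [heq]
      have m1 : Measurable fun p : ℝ × ℝ => max (p.1 - u) 0 * gpdf p.1 * σ⁻¹ := by
        apply Continuous.measurable
        fun_prop
      have m2 : Measurable fun p : ℝ × ℝ => gpdf ((p.2 - ρ * p.1) / σ) := by
        apply Continuous.measurable
        fun_prop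
      have m3 : Measurable fun p : ℝ × ℝ => Ψ p.2 := hΨmeas.comp measurable_snd
      exact m1.mul (m3.mul m2)
    · rintro ⟨x, y⟩
      show ‖(max (x - u) 0 * gpdf x * σ⁻¹) * (Ψ y * gpdf ((y - ρ * x) / σ))‖ ≤ _
      simp only
      rw [Real.norm_eq_abs, abs_mul, abs_mul, abs_mul, abs_mul]
      rw [abs_of_nonneg (le_max_right (x - u) 0), abs_of_nonneg (gpdf_nonneg x),
        abs_of_nonneg (gpdf_nonneg _), abs_of_nonneg (inv_nonneg.2 hσpos.le)]
      have h1 : max (x - u) 0 ≤ u + |x| := by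
        apply max_le _ (by positivity)
        have := le_abs_self x
        linarith
      have h2 : |Ψ y| ≤ A + B * |y| := hΨb y
      calc max (x - u) 0 * gpdf x * σ⁻¹ * (|Ψ y| * gpdf ((y - ρ * x) / σ))
          ≤ (u + |x|) * gpdf x * σ⁻¹ * ((A + B * |y|) * gpdf ((y - ρ * x) / σ)) := by
            apply mul_le_mul
            · apply mul_le_mul_of_nonneg_right _ (by positivity)
              exact mul_le_mul_of_nonneg_right h1 (gpdf_nonneg x)
            · exact mul_le_mul_of_nonneg_right h2 (gpdf_nonneg _)
            · exact mul_nonneg (abs_nonneg _) (gpdf_nonneg _)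
            · exact mul_nonneg (mul_nonneg (add_nonneg hu (abs_nonneg x)) (gpdf_nonneg x))
                (inv_nonneg.2 hσpos.le)
        _ = (σ⁻¹ * u + σ⁻¹ * |x|) * ((A + B * |y|) * (gpdf x * gpdf ((y - ρ * x) / σ))) := by
            ring
  rw [integral_integral_swap hInt]
  -- step iv : inner x-integral
  refine integral_congr_ae (Filter.Eventually.of_forall fun y => ?_)
  simp only
  have e3 : ∀ x : ℝ, Φ x y
      = (Ψ y * σ⁻¹ * gpdf y) * (max (x - u) 0 * gpdf ((x - ρ * y) / σ)) := by
    intro x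
    rw [hΦdef]
    simp only
    rw [show max (x - u) 0 * gpdf x * σ⁻¹ * (Ψ y * gpdf ((y - ρ * x) / σ))
        = (Ψ y * σ⁻¹) * (max (x - u) 0 * (gpdf x * gpdf ((y - ρ * x) / σ))) by ring,
      gpdf_swap hρsq x y]
    ring
  simp_rw [e3]
  rw [integral_const_mul, hσdef, cm_as_integral hρsq u y]
  have hne : Real.sqrt (1 - ρ ^ 2) ≠ 0 := by rw [← hσdef]; exact hσne
  field_simp

lemma cm_le' {α β u : ℝ} (hα0 : 0 ≤ α) (hα1 : α ≤ 1) (hβ0 : 0 ≤ β) (hβ1 : β ≤ 1)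
    (hu : 0 ≤ u) (y : ℝ) : condMean α β u y ≤ |y| + (u + M1) := by
  have h := cm_le α β u y
  rw [abs_of_nonneg hα0, abs_of_nonneg hβ0, abs_of_nonneg hu] at h
  have e1 : α * |y| ≤ |y| := mul_le_of_le_one_left (abs_nonneg y) hα1
  have e2 : β * M1 ≤ M1 := mul_le_of_le_one_left M1_nonneg hβ1
  linarith

lemma psi_abs_le {γ δ u : ℝ} (hu : 0 ≤ u)
    (hb : ∀ y, condMean γ δ u y ≤ |y| + (u + M1)) (y : ℝ) :
    |max (y - u) 0 - condMean γ δ u y| ≤ (2 * u + M1) + 2 * |y| := by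
  rw [abs_le]
  constructor
  · have h1 : (0:ℝ) ≤ max (y - u) 0 := le_max_right _ _
    have h2 := hb y
    have h3 := abs_nonneg y
    have h4 := M1_nonneg
    linarith
  · have h1 : max (y - u) 0 ≤ |y| + u := by
      apply max_le _ (by positivity)
      have := le_abs_self y; linarith
    have h2 := cm_nonneg γ δ u y
    have := M1_nonneg
    have := abs_nonneg y
    linarith

lemma integrable_ppcm {α β u : ℝ} (hα : 0 ≤ α) (hu : 0 ≤ u)
    (hb : ∀ y, condMean α β u y ≤ |y| + (u + M1)) :
    Integrable (fun x : ℝ => max (x - u) 0 * gpdf x * condMean α β u x) := by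
  have hppcont : Continuous (fun y : ℝ => max (y - u) 0) := by fun_prop
  refine (integrable_poly_gpdf (u * (u + M1)) (u + (u + M1)) 1).mono'
    (((hppcont.mul continuous_gpdf).measurable.mul
      (cm_mono β u hα).measurable).aestronglyMeasurable)
    (Filter.Eventually.of_forall fun x => ?_)
  have h0 := cm_nonneg α β u x
  have hg := gpdf_nonneg x
  have hp : (0:ℝ) ≤ max (x - u) 0 := le_max_right _ _
  rw [Real.norm_eq_abs, abs_of_nonneg (mul_nonneg (mul_nonneg hp hg) h0)]
  have h1 : max (x - u) 0 ≤ u + |x| := by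
    apply max_le _ (by positivity)
    have := le_abs_self x; linarith
  have h2 := hb x
  have key : max (x - u) 0 * condMean α β u x
      ≤ u * (u + M1) + (u + (u + M1)) * |x| + 1 * x ^ 2 := by
    nlinarith [sq_abs x, abs_nonneg x, M1_nonneg]
  calc max (x - u) 0 * gpdf x * condMean α β u x
      = (max (x - u) 0 * condMean α β u x) * gpdf x := by ring
    _ ≤ (u * (u + M1) + (u + (u + M1)) * |x| + 1 * x ^ 2) * gpdf x :=
        mul_le_mul_of_nonneg_right key hg

lemma integrable_cm_comp {γ β u : ℝ} (hγ : 0 ≤ γ) (hu : 0 ≤ u)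
    (hb : ∀ y, condMean γ β u y ≤ |y| + (u + M1)) (m b : ℝ) (hbpos : 0 ≤ b) :
    Integrable (fun z : ℝ => condMean γ β u (m + b * z) * gpdf z) := by
  have hmz : Measurable fun z : ℝ => m + b * z :=
    measurable_const.add (measurable_id.const_mul b)
  refine (integrable_poly_gpdf (|m| + (u + M1)) b 0).mono'
    ((((cm_mono β u hγ).measurable.comp hmz).mul
      continuous_gpdf.measurable).aestronglyMeasurable)
    (Filter.Eventually.of_forall fun z => ?_)
  have h0 := cm_nonneg γ β u (m + b * z)
  have hg := gpdf_nonneg z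
  rw [Real.norm_eq_abs, abs_of_nonneg (mul_nonneg h0 hg)]
  apply mul_le_mul_of_nonneg_right _ hg
  have h2 := hb (m + b * z)
  have h3 : |m + b * z| ≤ |m| + b * |z| := by
    calc |m + b * z| ≤ |m| + |b * z| := abs_add_le _ _
      _ = |m| + b * |z| := by rw [abs_mul, abs_of_nonneg hbpos]
  nlinarith [sq_nonneg z]

lemma integrable_cm_mul {α β γ δ u : ℝ} (hα : 0 ≤ α) (hγ : 0 ≤ γ) (hu : 0 ≤ u)
    (hbα : ∀ y, condMean α β u y ≤ |y| + (u + M1))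
    (hbγ : ∀ y, condMean γ δ u y ≤ |y| + (u + M1)) :
    Integrable (fun y : ℝ =>
      condMean α β u y * ((max (y - u) 0 - condMean γ δ u y) * gpdf y)) := by
  have hppcont : Continuous (fun y : ℝ => max (y - u) 0) := by fun_prop
  have hΨmeas : Measurable (fun y : ℝ => max (y - u) 0 - condMean γ δ u y) :=
    hppcont.measurable.sub (cm_mono δ u hγ).measurable
  refine (integrable_poly_gpdf ((u + M1) * (2 * u + M1)) ((2 * u + M1) + 2 * (u + M1)) 2).mono'
    (((cm_mono β u hα).measurable.mul
      (hΨmeas.mul continuous_gpdf.measurable)).aestronglyMeasurable)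
    (Filter.Eventually.of_forall fun y => ?_)
  rw [Real.norm_eq_abs, abs_mul, abs_mul, abs_of_nonneg (cm_nonneg α β u y),
    abs_of_nonneg (gpdf_nonneg y)]
  have h1 := hbα y
  have h2 := psi_abs_le hu hbγ y
  have h0 := cm_nonneg α β u y
  have habs := abs_nonneg y
  have hg := gpdf_nonneg y
  have key : condMean α β u y * |max (y - u) 0 - condMean γ δ u y|
      ≤ (u + M1) * (2 * u + M1) + ((2 * u + M1) + 2 * (u + M1)) * |y| + 2 * y ^ 2 := by
    nlinarith [sq_abs y, abs_nonneg (max (y - u) 0 - condMean γ δ u y), M1_nonneg]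
  calc condMean α β u y * (|max (y - u) 0 - condMean γ δ u y| * gpdf y)
      = (condMean α β u y * |max (y - u) 0 - condMean γ δ u y|) * gpdf y := by ring
    _ ≤ ((u + M1) * (2 * u + M1) + ((2 * u + M1) + 2 * (u + M1)) * |y| + 2 * y ^ 2)
          * gpdf y := mul_le_mul_of_nonneg_right key hg

lemma main_ineq {u ρ₁ ρ₂ : ℝ} (hu : 0 ≤ u) (h₁ : 0 ≤ ρ₁) (hlt : ρ₁ < ρ₂) (h₃ : ρ₂ < 1) :
    ∫ x : ℝ, max (x - u) 0 * gpdf x * condMean ρ₁ (Real.sqrt (1 - ρ₁ ^ 2)) u x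
      ≤ ∫ x : ℝ, max (x - u) 0 * gpdf x * condMean ρ₂ (Real.sqrt (1 - ρ₂ ^ 2)) u x := by
  have hρ₂pos : 0 < ρ₂ := lt_of_le_of_lt h₁ hlt
  have hρ₂0 : 0 ≤ ρ₂ := hρ₂pos.le
  have hρ₁1 : ρ₁ < 1 := hlt.trans h₃
  have h1ρ₁ : (0:ℝ) < 1 - ρ₁ ^ 2 := by nlinarith
  have h1ρ₂ : (0:ℝ) < 1 - ρ₂ ^ 2 := by nlinarith
  set σ₁ := Real.sqrt (1 - ρ₁ ^ 2) with hσ₁def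
  set σ₂ := Real.sqrt (1 - ρ₂ ^ 2) with hσ₂def
  have hσ₁pos : 0 < σ₁ := Real.sqrt_pos.2 h1ρ₁
  have hσ₂pos : 0 < σ₂ := Real.sqrt_pos.2 h1ρ₂
  have hσ₁sq : σ₁ ^ 2 = 1 - ρ₁ ^ 2 := Real.sq_sqrt h1ρ₁.le
  have hσ₂sq : σ₂ ^ 2 = 1 - ρ₂ ^ 2 := Real.sq_sqrt h1ρ₂.le
  have hσ₁le1 : σ₁ ≤ 1 := by nlinarith [sq_nonneg (σ₁ - 1), sq_nonneg ρ₁]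
  have hσ₂le1 : σ₂ ≤ 1 := by nlinarith [sq_nonneg (σ₂ - 1), sq_nonneg ρ₂]
  set c := ρ₁ / ρ₂ with hcdef
  have hc0 : 0 ≤ c := div_nonneg h₁ hρ₂0
  have hc1 : c < 1 := (div_lt_one hρ₂pos).2 hlt
  have hcρ : c * ρ₂ = ρ₁ := div_mul_cancel₀ ρ₁ (ne_of_gt hρ₂pos)
  have h1c : (0:ℝ) < 1 - c ^ 2 := by nlinarith
  set s := Real.sqrt (1 - c ^ 2) with hsdef
  have hspos : 0 < s := Real.sqrt_pos.2 h1c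
  have hsne : s ≠ 0 := ne_of_gt hspos
  have hssq : s ^ 2 = 1 - c ^ 2 := Real.sq_sqrt h1c.le
  have hsle1 : s ≤ 1 := by nlinarith [sq_nonneg (s - 1), sq_nonneg c]
  have hM1 := M1_nonneg
  -- uniform linear bounds on the conditional means
  have hχle : ∀ y, condMean c s u y ≤ |y| + (u + M1) :=
    cm_le' hc0 hc1.le hspos.le hsle1 hu
  have hhhle : ∀ y, condMean ρ₂ σ₂ u y ≤ |y| + (u + M1) :=
    cm_le' hρ₂0 h₃.le hσ₂pos.le hσ₂le1 hu
  have hg1le : ∀ y, condMean ρ₁ σ₁ u y ≤ |y| + (u + M1) :=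
    cm_le' h₁ hρ₁1.le hσ₁pos.le hσ₁le1 hu
  -- claim 1 : mixture representation of the smaller-correlation conditional mean
  have hab : (c * σ₂) ^ 2 + s ^ 2 = σ₁ ^ 2 := by
    have h2 : c ^ 2 * ρ₂ ^ 2 = ρ₁ ^ 2 := by rw [← hcρ]; ring
    rw [mul_pow, hσ₂sq, hssq, hσ₁sq]
    linear_combination (-1 : ℝ) * h2
  have claim1 : ∀ x : ℝ, condMean ρ₁ σ₁ u x
      = ∫ z : ℝ, condMean c s u (ρ₂ * x + σ₂ * z) * gpdf z := by
    intro x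
    have hr := rot (ρ₁ * x - u) (c * σ₂) hsne hσ₁pos hab
    have el : ∀ z : ℝ,
        (∫ w : ℝ, max (ρ₁ * x - u + ((c * σ₂) * z + s * w)) 0 * gpdf w) * gpdf z
        = condMean c s u (ρ₂ * x + σ₂ * z) * gpdf z := by
      intro z
      congr 1
      unfold condMean
      refine integral_congr_ae (Filter.Eventually.of_forall fun w => ?_)
      simp only
      rw [show ρ₁ * x - u + ((c * σ₂) * z + s * w)
          = c * (ρ₂ * x + σ₂ * z) + s * w - u from by rw [← hcρ]; ring]
    have er : ∀ t : ℝ, max (ρ₁ * x - u + σ₁ * t) 0 * gpdf t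
        = max (ρ₁ * x + σ₁ * t - u) 0 * gpdf t := fun t => by
      rw [show ρ₁ * x - u + σ₁ * t = ρ₁ * x + σ₁ * t - u from by ring]
    calc condMean ρ₁ σ₁ u x
        = ∫ t : ℝ, max (ρ₁ * x + σ₁ * t - u) 0 * gpdf t := condMean_def ρ₁ σ₁ u x
      _ = ∫ t : ℝ, max (ρ₁ * x - u + σ₁ * t) 0 * gpdf t :=
          (integral_congr_ae (Filter.Eventually.of_forall fun t => er t)).symm
      _ = ∫ z : ℝ, (∫ w : ℝ, max (ρ₁ * x - u + ((c * σ₂) * z + s * w)) 0 * gpdf w) * gpdf z :=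
          hr.symm
      _ = ∫ z : ℝ, condMean c s u (ρ₂ * x + σ₂ * z) * gpdf z :=
          integral_congr_ae (Filter.Eventually.of_forall el)
  have claim2 : ∀ x : ℝ, condMean ρ₂ σ₂ u x
      = ∫ z : ℝ, max (ρ₂ * x + σ₂ * z - u) 0 * gpdf z := fun x => condMean_def ρ₂ σ₂ u x
  -- the single-crossing function Ψ
  set Ψ : ℝ → ℝ := fun y => max (y - u) 0 - condMean c s u y with hΨdef
  have hχmono : Monotone (fun y => condMean c s u y) := cm_mono s u hc0
  have hppcont : Continuous (fun y : ℝ => max (y - u) 0) := by fun_prop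
  have hΨmeas : Measurable Ψ := by
    rw [hΨdef]; exact hppcont.measurable.sub hχmono.measurable
  have hΨb : ∀ y, |Ψ y| ≤ (2 * u + M1) + 2 * |y| := by
    intro y
    rw [hΨdef]
    exact psi_abs_le hu hχle y
  -- zero mean of Ψ against the gaussian
  have hzero : ∫ y : ℝ, Ψ y * gpdf y = 0 := by
    rw [hΨdef]
    exact zero_int hc0 hu hsne (by rw [hssq]; ring)
  have hInt1 : Integrable (fun y : ℝ => Ψ y * gpdf y) := by
    rw [hΨdef]
    have e : (fun y : ℝ => (max (y - u) 0 - condMean c s u y) * gpdf y)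
        = fun y : ℝ => max (y - u) 0 * gpdf y - condMean c s u y * gpdf y := by
      funext y; ring
    rw [e]
    exact (integrable_pp_gpdf hu).sub (integrable_cmf_gpdf s u hc0)
  have hhhmono : Monotone (fun y => condMean ρ₂ σ₂ u y) := cm_mono σ₂ u hρ₂0
  have hInt2 : Integrable (fun y : ℝ => condMean ρ₂ σ₂ u y * (Ψ y * gpdf y)) := by
    rw [hΨdef]
    exact integrable_cm_mul hρ₂0 hc0 hu hhhle hχle
  -- sign structure of Ψ
  have hψu : ∀ y, y ≤ u → Ψ y ≤ 0 := by
    intro y hy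
    rw [hΨdef]
    simp only
    rw [max_eq_right (by linarith : y - u ≤ 0)]
    have := cm_nonneg c s u y
    linarith
  have hψmono : ∀ y₁ y₂, u ≤ y₁ → y₁ ≤ y₂ → Ψ y₁ + (1 - c) * (y₂ - y₁) ≤ Ψ y₂ := by
    intro y₁ y₂ hy₁ hy₂
    rw [hΨdef]
    simp only
    rw [max_eq_left (by linarith : 0 ≤ y₁ - u), max_eq_left (by linarith : 0 ≤ y₂ - u)]
    have h3 := cm_lip s u hc0 hy₂
    have hmc : c * (y₂ - y₁) ≤ 1 * (y₂ - y₁) :=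
      mul_le_mul_of_nonneg_right hc1.le (by linarith)
    linarith
  set Y := u + (condMean c s u u + 1) / (1 - c) with hYdef
  have hYu : u ≤ Y := by
    rw [hYdef]
    have h := cm_nonneg c s u u
    have : (0:ℝ) ≤ (condMean c s u u + 1) / (1 - c) :=
      div_nonneg (by linarith) (by linarith)
    linarith
  have hΨY : 0 < Ψ Y := by
    have h := hψmono u Y le_rfl hYu
    have hpu : Ψ u = max (u - u) 0 - condMean c s u u := rfl
    have h1 : max (u - u) 0 = (0:ℝ) := by simp
    have h2 : (1 - c) * (Y - u) = condMean c s u u + 1 := by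
      have hne : (1:ℝ) - c ≠ 0 := by linarith
      rw [hYdef, add_sub_cancel_left, mul_comm, div_mul_cancel₀ _ hne]
    rw [hpu, h1] at h
    linarith
  set S := {y : ℝ | 0 < Ψ y} with hSdef
  have hSne : S.Nonempty := ⟨Y, hΨY⟩
  have hSlb : ∀ y ∈ S, u ≤ y := by
    intro y hy
    have h0 : 0 < Ψ y := hy
    by_contra hc'
    push_neg at hc'
    have := hψu y hc'.le
    linarith
  have hSbdd : BddBelow S := ⟨u, hSlb⟩
  set y₀ := sInf S with hy₀def
  have hpos : ∀ y, y₀ < y → 0 ≤ Ψ y := by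
    intro y hy
    obtain ⟨y', hy'S, hy'lt⟩ := exists_lt_of_csInf_lt hSne hy
    have h1 : u ≤ y' := hSlb y' hy'S
    have h2 := hψmono y' y h1 hy'lt.le
    have h3 : 0 < Ψ y' := hy'S
    have hmn : (0:ℝ) ≤ (1 - c) * (y - y') :=
      mul_nonneg (by linarith) (by linarith)
    linarith
  have hneg : ∀ y, y < y₀ → Ψ y ≤ 0 := by
    intro y hy
    by_contra hpos'
    push_neg at hpos'
    have hmem : y ∈ S := hpos'
    have := csInf_le hSbdd hmem
    linarith
  -- pointwise positivity after recentering
  have hptwise : ∀ y : ℝ,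
      0 ≤ (condMean ρ₂ σ₂ u y - condMean ρ₂ σ₂ u y₀) * (Ψ y * gpdf y) := by
    intro y
    rcases lt_trichotomy y y₀ with h | h | h
    · have hA : condMean ρ₂ σ₂ u y - condMean ρ₂ σ₂ u y₀ ≤ 0 := by
        have := hhhmono h.le
        simp only at this
        linarith
      have hB : Ψ y * gpdf y ≤ 0 :=
        mul_nonpos_iff.2 (Or.inr ⟨hneg y h, gpdf_nonneg y⟩)
      have hAB := mul_nonneg (neg_nonneg.2 hA) (neg_nonneg.2 hB)
      rw [neg_mul_neg] at hAB
      exact hAB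
    · rw [h]; simp
    · apply mul_nonneg
      · have := hhhmono h.le
        simp only at this
        linarith
      · exact mul_nonneg (hpos y h) (gpdf_nonneg y)
  have hE : 0 ≤ ∫ y : ℝ, condMean ρ₂ σ₂ u y * (Ψ y * gpdf y) := by
    have e : (fun y : ℝ => (condMean ρ₂ σ₂ u y - condMean ρ₂ σ₂ u y₀) * (Ψ y * gpdf y))
        = fun y : ℝ => condMean ρ₂ σ₂ u y * (Ψ y * gpdf y)
          - condMean ρ₂ σ₂ u y₀ * (Ψ y * gpdf y) := by
      funext y; ring
    have hnn : 0 ≤ ∫ y : ℝ, (condMean ρ₂ σ₂ u y - condMean ρ₂ σ₂ u y₀) * (Ψ y * gpdf y) :=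
      integral_nonneg hptwise
    rw [e, integral_sub hInt2 (hInt1.const_mul _), integral_const_mul, hzero, mul_zero,
      sub_zero] at hnn
    exact hnn
  -- assemble
  have hexch := exchange hρ₂0 h₃ hu hΨmeas (A := 2 * u + M1) (B := 2)
    (by positivity) (by norm_num) hΨb
  rw [← hσ₂def] at hexch
  have hgoal : (∫ x : ℝ, max (x - u) 0 * gpdf x * condMean ρ₂ σ₂ u x)
      - (∫ x : ℝ, max (x - u) 0 * gpdf x * condMean ρ₁ σ₁ u x)
      = ∫ y : ℝ, condMean ρ₂ σ₂ u y * (Ψ y * gpdf y) := by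
    rw [← integral_sub (integrable_ppcm hρ₂0 hu hhhle) (integrable_ppcm h₁ hu hg1le)]
    have eintz : ∀ x : ℝ,
        max (x - u) 0 * gpdf x * condMean ρ₂ σ₂ u x
          - max (x - u) 0 * gpdf x * condMean ρ₁ σ₁ u x
        = max (x - u) 0 * gpdf x * (∫ z : ℝ, Ψ (ρ₂ * x + σ₂ * z) * gpdf z) := by
      intro x
      rw [claim1 x, claim2 x]
      have e2 : ∫ z : ℝ, Ψ (ρ₂ * x + σ₂ * z) * gpdf z
          = (∫ z : ℝ, max (ρ₂ * x + σ₂ * z - u) 0 * gpdf z)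
            - ∫ z : ℝ, condMean c s u (ρ₂ * x + σ₂ * z) * gpdf z := by
        rw [← integral_sub (integrable_cm ρ₂ σ₂ u x)
          (integrable_cm_comp hc0 hu hχle (ρ₂ * x) σ₂ hσ₂pos.le)]
        refine integral_congr_ae (Filter.Eventually.of_forall fun z => ?_)
        rw [hΨdef]
        simp only
        ring
      rw [e2]
      ring
    rw [integral_congr_ae (Filter.Eventually.of_forall eintz), hexch]
    refine integral_congr_ae (Filter.Eventually.of_forall fun y => ?_)
    ring
  linarith [hE, hgoal.le, hgoal.symm.le]

/-- `E[(X-u)⁺ (Y-u)⁺]` for a standard bivariate normal pair is non-decreasing in the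
correlation on `[0,1)`. -/
theorem stmt_15 (u ρ₁ ρ₂ : ℝ) (hu : 0 ≤ u)
    (h₁ : 0 ≤ ρ₁) (h₂ : ρ₁ ≤ ρ₂) (h₃ : ρ₂ < 1) :
    (∫ p : ℝ × ℝ, max (p.1 - u) 0 * max (p.2 - u) 0 * bvnPDF ρ₁ p.1 p.2)
      ≤ ∫ p : ℝ × ℝ, max (p.1 - u) 0 * max (p.2 - u) 0 * bvnPDF ρ₂ p.1 p.2 := by
  rcases eq_or_lt_of_le h₂ with heq | hlt
  · rw [heq]
  · have hρ₁1 : ρ₁ < 1 := hlt.trans h₃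
    rw [reduce h₁ hρ₁1 hu, reduce (h₁.trans h₂) h₃ hu]
    exact main_ineq hu h₁ hlt h₃
end
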